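/- arXiv:1605.05610 — 2 statements merged into one kernel-verified Lean document; each statement's English description precedes it below -/
import Mathlib

section
/- Let σ₁ ≥ σ₂ ≥ … ≥ σ_n ≥ 0 be real numbers, let 1 ≤ k < n, and let t be a natural number. Let S₁ be the k×k diagonal matrix with diagonal entries σ₁,…,σ_k and let S₂ be the (n−k)×(n−k) diagonal matrix with diagonal entries σ_{k+1},…,σ_n. Let G₁ be an invertible real k×k matrix and G₂ a real (n−k)×k matrix. Suppose y₁ ∈ ℝᵏ and y₂ ∈ ℝ^{n−k} satisfy ‖y₁‖² + ‖y₂‖² ≤ 1 and y₁ᵀ·S₁^{2t+1}·G₁ + y₂ᵀ·S₂^{2t+1}·G₂ = 0. Then for every i with 1 ≤ i ≤ k and σ_i > 0, one has |y₁(i)| ≤ (σ_{k+1}/σ_i)^{2t+1} · ‖G₂‖ · ‖G₁⁻¹‖. -/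
open Matrix
open scoped Matrix.Norms.L2Operator

/-- The spectral norm (ℓ₂→ℓ₂ operator norm) of a real matrix. -/
noncomputable def specNorm {n m : ℕ} (M : Matrix (Fin n) (Fin m) ℝ) : ℝ :=
  ‖LinearMap.toContinuousLinearMap (Matrix.toEuclideanLin M)‖

/-- The Euclidean norm of a vector in `Fin n → ℝ`. -/
noncomputable def eNorm {n : ℕ} (v : Fin n → ℝ) : ℝ :=
  ‖(WithLp.equiv 2 (Fin n → ℝ)).symm v‖

lemma specNorm_eq {n m : ℕ} (M : Matrix (Fin n) (Fin m) ℝ) : specNorm M = ‖M‖ := rfl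

lemma specNorm_transpose {n m : ℕ} (M : Matrix (Fin n) (Fin m) ℝ) :
    specNorm Mᵀ = specNorm M := by
  rw [specNorm_eq, specNorm_eq, ← conjTranspose_eq_transpose_of_trivial,
    l2_opNorm_conjTranspose]

lemma eNorm_mulVec_le {n m : ℕ} (M : Matrix (Fin n) (Fin m) ℝ) (x : Fin m → ℝ) :
    eNorm (M *ᵥ x) ≤ specNorm M * eNorm x :=
  M.l2_opNorm_mulVec ((WithLp.equiv 2 (Fin m → ℝ)).symm x)

lemma abs_coord_le_eNorm {n : ℕ} (v : Fin n → ℝ) (i : Fin n) : |v i| ≤ eNorm v := by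
  have := EuclideanSpace.norm_eq ((WithLp.equiv 2 (Fin n → ℝ)).symm v)
  rw [eNorm, this]
  have h1 : |v i| = Real.sqrt (|v i| ^ 2) := by
    rw [Real.sqrt_sq (abs_nonneg _)]
  rw [h1]
  apply Real.sqrt_le_sqrt
  exact Finset.single_le_sum (f := fun j => ‖v j‖ ^ 2) (fun j _ => by positivity)
    (Finset.mem_univ i)

lemma eNorm_smulcoord_le {m : ℕ} (d x : Fin m → ℝ) (c : ℝ) (hc : 0 ≤ c)
    (h : ∀ j, |d j| ≤ c) : eNorm (fun j => d j * x j) ≤ c * eNorm x := by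
  rw [eNorm, eNorm, EuclideanSpace.norm_eq, EuclideanSpace.norm_eq]
  have h1 : ∀ j : Fin m, ‖(fun j => d j * x j) j‖ ^ 2 ≤ c ^ 2 * ‖x j‖ ^ 2 := by
    intro j
    simp only [Real.norm_eq_abs, abs_mul, mul_pow, sq_abs]
    have hd : d j ^ 2 ≤ c ^ 2 := by nlinarith [abs_nonneg (d j), h j, sq_abs (d j)]
    nlinarith [sq_nonneg (x j), mul_le_mul_of_nonneg_right hd (sq_nonneg (x j))]
  calc Real.sqrt (∑ j, ‖(fun j => d j * x j) j‖ ^ 2)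
      ≤ Real.sqrt (∑ j, c ^ 2 * ‖x j‖ ^ 2) :=
        Real.sqrt_le_sqrt (Finset.sum_le_sum fun j _ => h1 j)
    _ = c * Real.sqrt (∑ j, ‖x j‖ ^ 2) := by
        rw [← Finset.mul_sum, Real.sqrt_mul (by positivity), Real.sqrt_sq hc]

/-- the coordinate bound for the top block of a unit vector
orthogonal to the iterated subspace. -/
theorem stmt_5 {n k : ℕ} (hk1 : 1 ≤ k) (hkn : k < n)
    (σ : Fin n → ℝ) (hσmono : Antitone σ) (hσpos : ∀ i, 0 ≤ σ i)
    (t : ℕ)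
    (S₁ : Matrix (Fin k) (Fin k) ℝ)
    (hS₁ : S₁ = Matrix.diagonal (fun i : Fin k => σ ⟨i.1, by omega⟩))
    (S₂ : Matrix (Fin (n - k)) (Fin (n - k)) ℝ)
    (hS₂ : S₂ = Matrix.diagonal (fun i : Fin (n - k) => σ ⟨k + i.1, by omega⟩))
    (G₁ : Matrix (Fin k) (Fin k) ℝ) (hG₁ : IsUnit G₁.det)
    (G₂ : Matrix (Fin (n - k)) (Fin k) ℝ)
    (y₁ : Fin k → ℝ) (y₂ : Fin (n - k) → ℝ)
    (hy : eNorm y₁ ^ 2 + eNorm y₂ ^ 2 ≤ 1)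
    (horth : Matrix.vecMul y₁ (S₁ ^ (2 * t + 1) * G₁) +
      Matrix.vecMul y₂ (S₂ ^ (2 * t + 1) * G₂) = 0) :
    ∀ i : Fin k, 0 < σ ⟨i.1, by omega⟩ →
      |y₁ i| ≤ (σ ⟨k, hkn⟩ / σ ⟨i.1, by omega⟩) ^ (2 * t + 1) *
        specNorm G₂ * specNorm G₁⁻¹ := by
  intro i hpos
  set p := 2 * t + 1 with hp
  have hG1inv : G₁ * G₁⁻¹ = 1 := mul_nonsing_inv G₁ hG₁
  -- the key identity
  have h1 : vecMul y₁ (S₁ ^ p) = -(vecMul y₂ (S₂ ^ p * G₂ * G₁⁻¹)) := by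
    have h0 : vecMul y₁ (S₁ ^ p * G₁) = -(vecMul y₂ (S₂ ^ p * G₂)) :=
      eq_neg_of_add_eq_zero_left horth
    calc vecMul y₁ (S₁ ^ p)
        = vecMul y₁ (S₁ ^ p * G₁ * G₁⁻¹) := by
          rw [mul_assoc, hG1inv, mul_one]
      _ = vecMul (vecMul y₁ (S₁ ^ p * G₁)) G₁⁻¹ := by rw [vecMul_vecMul]
      _ = vecMul (-(vecMul y₂ (S₂ ^ p * G₂))) G₁⁻¹ := by rw [h0]
      _ = -(vecMul y₂ (S₂ ^ p * G₂ * G₁⁻¹)) := by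
          rw [neg_vecMul, vecMul_vecMul]
  -- coordinate form
  have hcoord : σ ⟨i.1, by omega⟩ ^ p * |y₁ i| =
      |vecMul y₂ (S₂ ^ p * G₂ * G₁⁻¹) i| := by
    have := congrFun h1 i
    rw [hS₁, diagonal_pow, vecMul_diagonal] at this
    have h2 : |y₁ i * ((fun i : Fin k => σ ⟨i.1, by omega⟩) ^ p) i| =
        |(-(vecMul y₂ (S₂ ^ p * G₂ * G₁⁻¹))) i| := by rw [this]
    rw [Pi.neg_apply, abs_neg, Pi.pow_apply, abs_mul, abs_pow,
      abs_of_nonneg (hσpos _)] at h2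
    rw [← h2]; ring
  -- norm bound on the RHS
  set c := σ ⟨k, hkn⟩ with hc
  have hc0 : 0 ≤ c := hσpos _
  have hy2 : eNorm y₂ ≤ 1 := by
    nlinarith [sq_nonneg (eNorm y₁), norm_nonneg ((WithLp.equiv 2 (Fin (n-k) → ℝ)).symm y₂)]
  have hS2bound : eNorm (S₂ ^ p *ᵥ y₂) ≤ c ^ p * eNorm y₂ := by
    rw [hS₂, diagonal_pow]
    have : (Matrix.diagonal ((fun i : Fin (n-k) => σ ⟨k + i.1, by omega⟩) ^ p)) *ᵥ y₂ =
        fun j => ((fun i : Fin (n-k) => σ ⟨k + i.1, by omega⟩) ^ p) j * y₂ j := by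
      ext j; rw [mulVec_diagonal]
    rw [this]
    apply eNorm_smulcoord_le _ _ _ (by positivity)
    intro j
    rw [Pi.pow_apply, abs_pow, abs_of_nonneg (hσpos _)]
    exact pow_le_pow_left₀ (hσpos _) (hσmono (by simp [Fin.le_def])) p
  have hrhs : |vecMul y₂ (S₂ ^ p * G₂ * G₁⁻¹) i| ≤
      c ^ p * specNorm G₂ * specNorm G₁⁻¹ := by
    have hS2T : (S₂ ^ p)ᵀ = S₂ ^ p := by
      rw [Matrix.transpose_pow, hS₂, Matrix.diagonal_transpose]
    have e1 : G₁⁻¹ᵀ *ᵥ (G₂ᵀ *ᵥ (S₂ ^ p *ᵥ y₂)) =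
        vecMul y₂ (S₂ ^ p * G₂ * G₁⁻¹) := by
      conv_lhs => rw [mulVec_mulVec, mulVec_mulVec, ← hS2T, ← Matrix.transpose_mul,
        ← Matrix.transpose_mul, Matrix.mulVec_transpose]
      rw [← Matrix.mul_assoc]
    calc |vecMul y₂ (S₂ ^ p * G₂ * G₁⁻¹) i|
        ≤ eNorm (vecMul y₂ (S₂ ^ p * G₂ * G₁⁻¹)) := abs_coord_le_eNorm _ i
      _ = eNorm (G₁⁻¹ᵀ *ᵥ (G₂ᵀ *ᵥ (S₂ ^ p *ᵥ y₂))) := by rw [← e1]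
      _ ≤ specNorm G₁⁻¹ᵀ * eNorm (G₂ᵀ *ᵥ (S₂ ^ p *ᵥ y₂)) := eNorm_mulVec_le _ _
      _ ≤ specNorm G₁⁻¹ᵀ * (specNorm G₂ᵀ * eNorm (S₂ ^ p *ᵥ y₂)) := by
          have h3 : (0:ℝ) ≤ specNorm G₁⁻¹ᵀ := norm_nonneg _
          exact mul_le_mul_of_nonneg_left (eNorm_mulVec_le _ _) h3
      _ ≤ specNorm G₁⁻¹ * (specNorm G₂ * (c ^ p * 1)) := by
          rw [specNorm_transpose, specNorm_transpose]
          have h4 : (0:ℝ) ≤ specNorm G₁⁻¹ := norm_nonneg _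
          have h5 : (0:ℝ) ≤ specNorm G₂ := norm_nonneg _
          have h6 : eNorm (S₂ ^ p *ᵥ y₂) ≤ c ^ p * 1 := by
            calc eNorm (S₂ ^ p *ᵥ y₂) ≤ c ^ p * eNorm y₂ := hS2bound
              _ ≤ c ^ p * 1 := mul_le_mul_of_nonneg_left hy2 (by positivity)
          exact mul_le_mul_of_nonneg_left
            (mul_le_mul_of_nonneg_left h6 h5) h4
      _ = c ^ p * specNorm G₂ * specNorm G₁⁻¹ := by ring
  -- finish
  have hσip : (0:ℝ) < σ ⟨i.1, by omega⟩ ^ p := by positivity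
  rw [div_pow, div_mul_eq_mul_div, div_mul_eq_mul_div, le_div_iff₀ hσip]
  calc |y₁ i| * σ ⟨i.1, by omega⟩ ^ p
      = σ ⟨i.1, by omega⟩ ^ p * |y₁ i| := by ring
    _ = |vecMul y₂ (S₂ ^ p * G₂ * G₁⁻¹) i| := hcoord
    _ ≤ c ^ p * specNorm G₂ * specNorm G₁⁻¹ := hrhs
end

section
/- Let σ₁ ≥ σ₂ ≥ … ≥ σ_n ≥ 0 be real numbers, let 1 ≤ k < n, let ε > 0, let t be a natural number, and let M ≥ 0. Let 1 ≤ k' ≤ k be such that σ_{k'} ≥ (1+ε)·σ_{k+1} and σ_{k'+1} < (1+ε)·σ_{k+1}. Let y ∈ ℝⁿ be a unit vector such that |y(i)| ≤ (σ_{k+1}/σ_i)^{2t+1}·M for every 1 ≤ i ≤ k'. Then ∑_{i=1}^{n} y(i)²·σ_i² ≤ (M²·k·(1+ε)^{−4t} + (1+ε)²)·σ_{k+1}². -/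
open Matrix

/-- the final bound on `∑ y(i)² σ(i)²`. -/
theorem stmt_6 {n k : ℕ} (hk1 : 1 ≤ k) (hkn : k < n)
    (σ : Fin n → ℝ) (hσmono : Antitone σ) (hσpos : ∀ i, 0 ≤ σ i)
    (ε : ℝ) (hε : 0 < ε) (t : ℕ) (M : ℝ) (hM : 0 ≤ M)
    (k' : ℕ) (hk'1 : 1 ≤ k') (hk'k : k' ≤ k)
    (hbig : σ ⟨k' - 1, by omega⟩ ≥ (1 + ε) * σ ⟨k, hkn⟩)
    (hsmall : σ ⟨k', by omega⟩ < (1 + ε) * σ ⟨k, hkn⟩)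
    (y : Fin n → ℝ) (hy : eNorm y = 1)
    (hybound : ∀ i : Fin n, (i : ℕ) < k' →
      |y i| ≤ (σ ⟨k, hkn⟩ / σ i) ^ (2 * t + 1) * M) :
    ∑ i : Fin n, y i ^ 2 * σ i ^ 2 ≤
      (M ^ 2 * k * ((1 + ε) ^ (4 * t))⁻¹ + (1 + ε) ^ 2) * σ ⟨k, hkn⟩ ^ 2 := by
  set s := σ ⟨k, hkn⟩ with hs
  have hs0 : 0 ≤ s := hσpos _
  have hε1 : (0:ℝ) < 1 + ε := by linarith
  have hsum1 : ∑ i, y i ^ 2 = 1 := by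
    have h := hy
    unfold eNorm at h
    rw [EuclideanSpace.norm_eq] at h
    have h2 : ∑ i, ‖y i‖ ^ 2 = 1 := Real.sqrt_eq_one.mp h
    simpa [Real.norm_eq_abs, sq_abs] using h2
  have hbig' : ∀ i : Fin n, (i:ℕ) < k' → (1+ε) * s ≤ σ i := by
    intro i hi
    calc (1+ε)*s ≤ σ ⟨k'-1, by omega⟩ := hbig
    _ ≤ σ i := hσmono (by simp only [Fin.le_def]; omega)
  have hterm1 : ∀ i : Fin n, (i:ℕ) < k' →
      y i ^ 2 * σ i ^ 2 ≤ M ^ 2 * ((1 + ε) ^ (4 * t))⁻¹ * s ^ 2 := by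
    intro i hi
    have hσi : 0 ≤ σ i := hσpos i
    have hrhs0 : 0 ≤ M ^ 2 * ((1 + ε) ^ (4 * t))⁻¹ * s ^ 2 := by positivity
    rcases eq_or_lt_of_le hσi with h0 | hpos
    · have hb := hybound i hi
      rw [← h0, div_zero, zero_pow (by omega), zero_mul] at hb
      have hy0 : y i = 0 := abs_nonpos_iff.mp hb
      simpa [hy0] using hrhs0
    · have hq0 : 0 ≤ s / σ i := div_nonneg hs0 hpos.le
      have hq : s / σ i ≤ 1/(1+ε) := by
        rw [div_le_div_iff₀ hpos hε1]
        have := hbig' i hi; linarith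
      have h1 : y i ^ 2 ≤ ((s/σ i)^(2*t+1)*M)^2 := by
        rw [← sq_abs (y i)]
        exact pow_le_pow_left₀ (abs_nonneg _) (hybound i hi) 2
      calc y i ^ 2 * σ i ^ 2 ≤ ((s/σ i)^(2*t+1)*M)^2 * σ i ^ 2 :=
            mul_le_mul_of_nonneg_right h1 (sq_nonneg _)
        _ = M^2 * (s/σ i)^(4*t) * s^2 := by
            rw [mul_pow, ← pow_mul]
            have : (2*t+1)*2 = 4*t + 2 := by ring
            rw [this, pow_add]
            field_simp
        _ ≤ M^2 * ((1 + ε) ^ (4 * t))⁻¹ * s^2 := by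
            have h2 : (s/σ i)^(4*t) ≤ ((1+ε)^(4*t))⁻¹ := by
              calc (s/σ i)^(4*t) ≤ (1/(1+ε))^(4*t) := pow_le_pow_left₀ hq0 hq _
                _ = ((1+ε)^(4*t))⁻¹ := by rw [one_div, inv_pow]
            have := mul_le_mul_of_nonneg_left h2 (sq_nonneg M)
            nlinarith [sq_nonneg s, sq_nonneg M]
  have hterm2 : ∀ i : Fin n, ¬ (i:ℕ) < k' →
      y i ^ 2 * σ i ^ 2 ≤ y i ^ 2 * ((1+ε)^2 * s^2) := by
    intro i hi
    have hik : k' ≤ (i:ℕ) := not_lt.mp hi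
    have h1 : σ i ≤ σ ⟨k', by omega⟩ := hσmono (by simp only [Fin.le_def]; omega)
    have h2 : σ i < (1+ε) * s := lt_of_le_of_lt h1 hsmall
    have h3 : σ i ^ 2 ≤ ((1+ε)*s)^2 := by
      nlinarith [hσpos i]
    calc y i ^ 2 * σ i ^ 2 ≤ y i ^ 2 * ((1+ε)*s)^2 :=
          mul_le_mul_of_nonneg_left h3 (sq_nonneg _)
      _ = y i ^ 2 * ((1+ε)^2 * s^2) := by ring
  classical
  rw [← Finset.sum_filter_add_sum_filter_not Finset.univ (fun i : Fin n => (i:ℕ) < k')]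
  have hcard : (Finset.univ.filter fun i : Fin n => (i:ℕ) < k').card ≤ k := by
    have h1 : (Finset.univ.filter fun i : Fin n => (i:ℕ) < k').card ≤ (Finset.range k').card :=
      Finset.card_le_card_of_injOn (fun i => (i:ℕ))
        (by intro i hi; simp at hi ⊢; exact hi)
        (fun a _ b _ h => Fin.val_injective h)
    rw [Finset.card_range] at h1
    exact h1.trans hk'k
  have hA : ∑ i ∈ Finset.univ.filter (fun i : Fin n => (i:ℕ) < k'), y i ^ 2 * σ i ^ 2
      ≤ (k:ℝ) * (M ^ 2 * ((1 + ε) ^ (4 * t))⁻¹ * s ^ 2) := by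
    calc _ ≤ (Finset.univ.filter fun i : Fin n => (i:ℕ) < k').card •
        (M ^ 2 * ((1 + ε) ^ (4 * t))⁻¹ * s ^ 2) := by
          apply Finset.sum_le_card_nsmul
          intro i hi
          exact hterm1 i (by simpa using hi)
      _ ≤ (k:ℝ) * (M ^ 2 * ((1 + ε) ^ (4 * t))⁻¹ * s ^ 2) := by
          rw [nsmul_eq_mul]
          apply mul_le_mul_of_nonneg_right _ (by positivity)
          exact_mod_cast hcard
  have hB : ∑ i ∈ Finset.univ.filter (fun i : Fin n => ¬ (i:ℕ) < k'), y i ^ 2 * σ i ^ 2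
      ≤ (1+ε)^2 * s^2 := by
    calc _ ≤ ∑ i ∈ Finset.univ.filter (fun i : Fin n => ¬ (i:ℕ) < k'),
          y i ^ 2 * ((1+ε)^2 * s^2) := by
          apply Finset.sum_le_sum
          intro i hi
          exact hterm2 i (by simpa using hi)
      _ = (∑ i ∈ Finset.univ.filter (fun i : Fin n => ¬ (i:ℕ) < k'), y i ^ 2) * ((1+ε)^2 * s^2) := by
          rw [Finset.sum_mul]
      _ ≤ 1 * ((1+ε)^2 * s^2) := by
          apply mul_le_mul_of_nonneg_right _ (by positivity)
          rw [← hsum1]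
          exact Finset.sum_le_sum_of_subset_of_nonneg (Finset.filter_subset _ _)
            (fun i _ _ => sq_nonneg _)
      _ = (1+ε)^2 * s^2 := one_mul _
  have := add_le_add hA hB
  calc _ ≤ (k:ℝ) * (M ^ 2 * ((1 + ε) ^ (4 * t))⁻¹ * s ^ 2) + (1+ε)^2 * s^2 := this
    _ = (M ^ 2 * k * ((1 + ε) ^ (4 * t))⁻¹ + (1 + ε) ^ 2) * s ^ 2 := by ring
end
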